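/- arXiv:1203.4840 — 2 statements merged into one kernel-verified Lean document; each statement's English description precedes it below -/
import Mathlib

section
/- Let ψ: ℝⁿ → (−∞,+∞] be a proper convex lower semicontinuous function. Then ∂ψ_*(x,q) = inf_{x*∈∂ψ(x)} ⟨x*, q⟩ for every (x,q) ∈ Int(Dom ψ) × ℝⁿ, and also for every (x,q) ∈ ∂(Dom ψ) × ℝⁿ such that inf_{n ∈ N(x)} ⟨n,q⟩ > 0, where N(x) := {x_* ∈ ℝⁿ : |x_*| = 1 and ⟨x_*, z−x⟩ ≤ 0 for all z in the closure of Dom ψ} is the set of unit outward normals of the closure of Dom ψ at x. -/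
open scoped InnerProductSpace
open Filter Set

noncomputable section

/-- `ℝⁿ` with the Euclidean norm. -/
abbrev EV (n : ℕ) := EuclideanSpace ℝ (Fin n)

/-- Convexity of an extended-real-valued function. -/
def ConvexE {E : Type*} [AddCommGroup E] [Module ℝ E] (ψ : E → EReal) : Prop :=
  ∀ x y : E, ∀ a b : ℝ, 0 ≤ a → 0 ≤ b → a + b = 1 →
    ψ (a • x + b • y) ≤ (a : EReal) * ψ x + (b : EReal) * ψ y

/-- The subdifferential `∂ψ(x)` of a convex extended-real-valued function. -/
def subdiff {n : ℕ} (ψ : EV n → EReal) (x : EV n) : Set (EV n) :=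
  {xs | ∀ v : EV n, ((⟪xs, v - x⟫_ℝ : ℝ) : EReal) + ψ x ≤ ψ v}

/-- `∂ψ_*(x,q)`: the liminf of `⟪x*, q'⟫` as `(x',q') → (x,q)` with `x* ∈ ∂ψ(x')`. -/
def psiLower {n : ℕ} (ψ : EV n → EReal) (x q : EV n) : EReal :=
  Filter.liminf (fun p : EV n × EV n × EV n => ((⟪p.2.1, p.2.2⟫_ℝ : ℝ) : EReal))
    ((Filter.comap (fun p : EV n × EV n × EV n => (p.1, p.2.2)) (nhds (x, q))) ⊓
      Filter.principal {p : EV n × EV n × EV n | p.2.1 ∈ subdiff ψ p.1})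

/-- The set of unit outward normals to the closure of `Dom ψ` at `x`. -/
def unitNormals {n : ℕ} (D : Set (EV n)) (x : EV n) : Set (EV n) :=
  {m | ‖m‖ = 1 ∧ ∀ z ∈ closure D, ⟪m, z - x⟫_ℝ ≤ 0}

section Aux

variable {n : ℕ} {ψ : EV n → EReal}

/-- From the subgradient inequality at a point where `ψ` is finite, extract real data. -/
lemma subgrad_real (hbot : ∀ y, ψ y ≠ ⊥) {u x v : EV n} (hu : u ∈ subdiff ψ x) {w : ℝ}
    (hv : ψ v = (w : EReal)) :
    ψ x = ((ψ x).toReal : EReal) ∧ ⟪u, v - x⟫_ℝ + (ψ x).toReal ≤ w := by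
  have h := hu v
  rw [hv] at h
  have hxt : ψ x ≠ ⊤ := by
    intro ht
    rw [ht, EReal.add_top_of_ne_bot (EReal.coe_ne_bot _)] at h
    exact (EReal.coe_lt_top w).not_ge h
  have hxe : ψ x = ((ψ x).toReal : EReal) := (EReal.coe_toReal hxt (hbot x)).symm
  refine ⟨hxe, ?_⟩
  rw [hxe, ← EReal.coe_add, EReal.coe_le_coe_iff] at h
  exact h

/-- The graph of the subdifferential is sequentially closed. -/
lemma subdiff_closed (hbot : ∀ y, ψ y ≠ ⊥) (hlsc : LowerSemicontinuous ψ)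
    {x u : EV n} {xk uk : ℕ → EV n}
    (hx : Tendsto xk atTop (nhds x)) (hu : Tendsto uk atTop (nhds u))
    (hmem : ∀ᶠ k in atTop, uk k ∈ subdiff ψ (xk k)) : u ∈ subdiff ψ x := by
  intro v
  rcases eq_or_ne (ψ v) ⊤ with hv | hv
  · rw [hv]; exact le_top
  obtain ⟨w, hw⟩ : ∃ w : ℝ, ψ v = (w : EReal) :=
    ⟨(ψ v).toReal, (EReal.coe_toReal hv (hbot v)).symm⟩
  set t := ⟪u, v - x⟫_ℝ with ht
  have htk : Tendsto (fun k => ⟪uk k, v - xk k⟫_ℝ) atTop (nhds t) :=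
    hu.inner (tendsto_const_nhds.sub hx)
  have hkey : ∀ᶠ k in atTop, ψ (xk k) = (((ψ (xk k)).toReal : ℝ) : EReal) ∧
      ⟪uk k, v - xk k⟫_ℝ + (ψ (xk k)).toReal ≤ w :=
    hmem.mono fun k hk => subgrad_real hbot hk hw
  rcases eq_or_ne (ψ x) ⊤ with hxt | hxt
  · -- impossible: lsc forces ψ (xk k) → ⊤ but it is bounded above
    exfalso
    have hy : ((w - t + 1 : ℝ) : EReal) < ψ x := by rw [hxt]; exact EReal.coe_lt_top _
    have hev : ∀ᶠ k in atTop, ((w - t + 1 : ℝ) : EReal) < ψ (xk k) := hx.eventually (hlsc x _ hy)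
    have hev2 : ∀ᶠ k in atTop, t - 1 < ⟪uk k, v - xk k⟫_ℝ :=
      htk.eventually (eventually_gt_nhds (by linarith))
    obtain ⟨k, h1, h2, h3⟩ := (hkey.and (hev.and hev2)).exists
    obtain ⟨heq, hle⟩ := h1
    rw [heq, EReal.coe_lt_coe_iff] at h2
    linarith
  · have hxe : ψ x = ((ψ x).toReal : EReal) := (EReal.coe_toReal hxt (hbot x)).symm
    set s := (ψ x).toReal with hs
    rw [hw, hxe, ← EReal.coe_add, EReal.coe_le_coe_iff]
    by_contra hcon
    push_neg at hcon
    set ε := (t + s - w) / 3 with hε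
    have hεpos : 0 < ε := by simp only [hε]; linarith
    have hy : ((s - ε : ℝ) : EReal) < ψ x := by
      rw [hxe, EReal.coe_lt_coe_iff]; linarith
    have hev : ∀ᶠ k in atTop, ((s - ε : ℝ) : EReal) < ψ (xk k) := hx.eventually (hlsc x _ hy)
    have hev2 : ∀ᶠ k in atTop, t - ε < ⟪uk k, v - xk k⟫_ℝ :=
      htk.eventually (eventually_gt_nhds (by linarith))
    obtain ⟨k, h1, h2, h3⟩ := (hkey.and (hev.and hev2)).exists
    obtain ⟨heq, hle⟩ := h1
    rw [heq, EReal.coe_lt_coe_iff] at h2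
    simp only [hε] at h2 h3 hle
    linarith

/-- Easy direction: the liminf is at most the inf over the subdifferential at the point. -/
lemma psiLower_le (x q : EV n) :
    psiLower ψ x q ≤ ⨅ xs ∈ subdiff ψ x, ((⟪xs, q⟫_ℝ : ℝ) : EReal) := by
  refine le_iInf₂ fun u hu => ?_
  have hpure : pure (x, u, q) ≤
      ((Filter.comap (fun p : EV n × EV n × EV n => (p.1, p.2.2)) (nhds (x, q))) ⊓
        Filter.principal {p : EV n × EV n × EV n | p.2.1 ∈ subdiff ψ p.1}) := by
    refine le_inf ?_ ?_
    · rw [← Filter.map_le_iff_le_comap, Filter.map_pure]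
      exact pure_le_nhds _
    · rw [le_principal_iff]
      exact hu
  rw [psiLower, Filter.liminf_eq]
  refine sSup_le fun a ha => ?_
  have := hpure ha
  rw [Filter.mem_pure] at this
  exact this

/-- Hard direction: under the normal-cone condition, the inf is at most the liminf. -/
lemma le_psiLower (hproper : (∃ x, ψ x ≠ ⊤) ∧ ∀ x, ψ x ≠ ⊥)
    (hlsc : LowerSemicontinuous ψ) (D : Set (EV n)) (hD : D = {z | ψ z ≠ ⊤})
    (x q : EV n) (hN : 0 < ⨅ m ∈ unitNormals D x, ((⟪m, q⟫_ℝ : ℝ) : EReal)) :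
    (⨅ xs ∈ subdiff ψ x, ((⟪xs, q⟫_ℝ : ℝ) : EReal)) ≤ psiLower ψ x q := by
  have hbot := hproper.2
  set F := ((Filter.comap (fun p : EV n × EV n × EV n => (p.1, p.2.2)) (nhds (x, q))) ⊓
      Filter.principal {p : EV n × EV n × EV n | p.2.1 ∈ subdiff ψ p.1}) with hF
  rw [psiLower, Filter.le_liminf_iff]
  intro b hb
  induction b using EReal.rec with
  | bot => exact Eventually.of_forall fun p => EReal.bot_lt_coe _
  | top => exact absurd hb not_top_lt
  | coe c =>
    by_contra hcon
    have hfreq : ∃ᶠ p in F, ⟪p.2.1, p.2.2⟫_ℝ ≤ c := by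
      rw [Filter.not_eventually] at hcon
      refine hcon.mono fun p hp => ?_
      rw [not_lt, EReal.coe_le_coe_iff] at hp
      exact hp
    set G := F ⊓ Filter.principal {p : EV n × EV n × EV n | ⟪p.2.1, p.2.2⟫_ℝ ≤ c} with hG
    have hne : G.NeBot := Filter.frequently_iff_neBot.mp hfreq
    have hcg : G.IsCountablyGenerated := by
      rw [hG, hF]; infer_instance
    obtain ⟨p, hp⟩ := Filter.exists_seq_tendsto G
    set xk : ℕ → EV n := fun k => (p k).1 with hxk
    set uk : ℕ → EV n := fun k => (p k).2.1 with huk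
    set qk : ℕ → EV n := fun k => (p k).2.2 with hqk
    have hpF : Tendsto p atTop F := hp.mono_right inf_le_left
    have hc1 : Tendsto (fun k => ((p k).1, (p k).2.2)) atTop (nhds (x, q)) := by
      have h := hpF.mono_right inf_le_left
      rw [Filter.tendsto_comap_iff] at h
      exact h
    rw [nhds_prod_eq, Filter.tendsto_prod_iff'] at hc1
    have hx : Tendsto xk atTop (nhds x) := by
      simp only [hxk]; exact hc1.1
    have hq : Tendsto qk atTop (nhds q) := by
      simp only [hqk]; exact hc1.2
    have hSF : ∀ᶠ p' in F, p'.2.1 ∈ subdiff ψ p'.1 := by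
      rw [hF, Filter.eventually_inf_principal]
      exact Eventually.of_forall fun _ h => h
    have hmemS : ∀ᶠ k in atTop, uk k ∈ subdiff ψ (xk k) := by
      simp only [huk, hxk]; exact hpF.eventually hSF
    have hGF : ∀ᶠ p' in G, ⟪p'.2.1, p'.2.2⟫_ℝ ≤ c := by
      rw [hG, Filter.eventually_inf_principal]
      exact Eventually.of_forall fun _ h => h
    have hle : ∀ᶠ k in atTop, ⟪uk k, qk k⟫_ℝ ≤ c := by
      simp only [huk, hqk]; exact hp.eventually hGF
    by_cases hub : Tendsto (fun k => ‖uk k‖) atTop atTop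
    · -- unbounded case: normal directions appear
      have hb1 : ∀ᶠ k in atTop, 1 ≤ ‖uk k‖ := hub.eventually_ge_atTop 1
      set mk : ℕ → EV n := fun k => ‖uk k‖⁻¹ • uk k with hmk
      have hmball : ∀ k, mk k ∈ Metric.closedBall (0 : EV n) 1 := by
        intro k
        rw [Metric.mem_closedBall, dist_zero_right, hmk]
        rcases eq_or_ne (uk k) 0 with h | h
        · simp [h]
        · rw [norm_smul, norm_inv, norm_norm, inv_mul_cancel₀ (norm_ne_zero_iff.mpr h)]
      obtain ⟨m, _, φ, hφ, hmt⟩ := (isCompact_closedBall (0 : EV n) 1).tendsto_subseq hmball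
      have hφtop : Tendsto φ atTop atTop := hφ.tendsto_atTop
      have hnormk : ∀ᶠ k in atTop, ‖mk k‖ = 1 := by
        refine hb1.mono fun k hk => ?_
        rw [hmk]
        have : uk k ≠ 0 := by intro h0; rw [h0, norm_zero] at hk; linarith
        rw [norm_smul, norm_inv, norm_norm, inv_mul_cancel₀ (norm_ne_zero_iff.mpr this)]
      have hnorm1 : ‖m‖ = 1 := by
        have h1 : Tendsto (fun j => ‖mk (φ j)‖) atTop (nhds ‖m‖) :=
          (continuous_norm.tendsto m).comp hmt
        have h2 : ∀ᶠ j in atTop, ‖mk (φ j)‖ = 1 := hφtop.eventually hnormk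
        exact tendsto_nhds_unique h1 (tendsto_const_nhds.congr' (h2.mono fun j hj => hj.symm))
      have hmN : m ∈ unitNormals D x := by
        refine ⟨hnorm1, ?_⟩
        have hDsub : ∀ z ∈ D, ⟪m, z - x⟫_ℝ ≤ 0 := by
          intro z hz
          have hzD : ψ z ≠ ⊤ := by rw [hD] at hz; exact hz
          have hψz : ψ z = (((ψ z).toReal : ℝ) : EReal) := (EReal.coe_toReal hzD (hbot z)).symm
          set w := (ψ z).toReal with hw
          obtain ⟨y, _, hy⟩ := EReal.exists_between_coe_real (Ne.bot_lt (hbot x))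
          have hev : ∀ᶠ k in atTop, ((y : ℝ) : EReal) < ψ (xk k) := hx.eventually (hlsc x _ hy)
          have key : ∀ᶠ k in atTop, ⟪mk k, z - xk k⟫_ℝ ≤ (w - y) / ‖uk k‖ := by
            filter_upwards [hmemS, hev, hb1] with k h1 h2 h3
            obtain ⟨heq, hle'⟩ := subgrad_real hbot h1 hψz
            rw [heq, EReal.coe_lt_coe_iff] at h2
            have htk : ⟪uk k, z - xk k⟫_ℝ ≤ w - y := by linarith
            rw [hmk, real_inner_smul_left, div_eq_inv_mul]
            exact mul_le_mul_of_nonneg_left htk (inv_nonneg.mpr (norm_nonneg _))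
          have hlim0 : Tendsto (fun k => (w - y) / ‖uk k‖) atTop (nhds 0) :=
            tendsto_const_nhds.div_atTop hub
          have hliml : Tendsto (fun j => ⟪mk (φ j), z - xk (φ j)⟫_ℝ) atTop
              (nhds ⟪m, z - x⟫_ℝ) :=
            hmt.inner (tendsto_const_nhds.sub (hx.comp hφtop))
          exact le_of_tendsto_of_tendsto hliml (hlim0.comp hφtop) (hφtop.eventually key)
        intro z hz
        have hcl : IsClosed {z' : EV n | ⟪m, z' - x⟫_ℝ ≤ 0} :=
          isClosed_le ((continuous_const.inner (continuous_id.sub continuous_const))) continuous_const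
        exact closure_minimal hDsub hcl hz
      have h1 : (0 : EReal) < ((⟪m, q⟫_ℝ : ℝ) : EReal) :=
        lt_of_lt_of_le hN (iInf₂_le m hmN)
      have h2 : ⟪m, q⟫_ℝ ≤ 0 := by
        have hev2 : ∀ᶠ k in atTop, ⟪mk k, qk k⟫_ℝ ≤ c / ‖uk k‖ := by
          filter_upwards [hle, hb1] with k h1' h3
          rw [hmk, real_inner_smul_left, div_eq_inv_mul]
          exact mul_le_mul_of_nonneg_left h1' (inv_nonneg.mpr (norm_nonneg _))
        have hlim0 : Tendsto (fun k => c / ‖uk k‖) atTop (nhds 0) :=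
          tendsto_const_nhds.div_atTop hub
        exact le_of_tendsto_of_tendsto (hmt.inner (hq.comp hφtop)) (hlim0.comp hφtop)
          (hφtop.eventually hev2)
      rw [show (0 : EReal) = ((0 : ℝ) : EReal) by norm_num, EReal.coe_lt_coe_iff] at h1
      linarith
    · -- bounded case: a subgradient at x appears
      obtain ⟨M, hM⟩ : ∃ M : ℝ, ∃ᶠ k in atTop, ‖uk k‖ < M := by
        rw [tendsto_atTop] at hub
        push_neg at hub
        obtain ⟨M, hM⟩ := hub
        exact ⟨M, hM⟩
      obtain ⟨φ, hφ, hφM⟩ := Filter.extraction_of_frequently_atTop hM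
      have hballmem : ∀ j, uk (φ j) ∈ Metric.closedBall (0 : EV n) M := by
        intro j
        rw [Metric.mem_closedBall, dist_zero_right]
        exact (hφM j).le
      obtain ⟨ulim, _, φ2, hφ2, hut⟩ :=
        (isCompact_closedBall (0 : EV n) M).tendsto_subseq hballmem
      have hσ : Tendsto (fun j => φ (φ2 j)) atTop atTop :=
        hφ.tendsto_atTop.comp hφ2.tendsto_atTop
      have hulim : ulim ∈ subdiff ψ x := by
        refine subdiff_closed hbot hlsc (hx.comp hσ) ?_ (hσ.eventually hmemS)
        exact hut
      have hval : ⟪ulim, q⟫_ℝ ≤ c :=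
        le_of_tendsto (hut.inner (hq.comp hσ)) (hσ.eventually hle)
      have : ((c : ℝ) : EReal) < ((⟪ulim, q⟫_ℝ : ℝ) : EReal) :=
        lt_of_lt_of_le hb (iInf₂_le ulim hulim)
      rw [EReal.coe_lt_coe_iff] at this
      linarith

end Aux

/-- **(Lemma 2.3 of Zălinescu.)** `∂ψ_*(x,q) = inf_{x* ∈ ∂ψ(x)} ⟪x*,q⟫` at interior points
of `Dom ψ`, and also at boundary points `x` such that `inf_{n ∈ N(x)} ⟪n,q⟫ > 0`. -/
theorem stmt_3 {n : ℕ} (ψ : EV n → EReal)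
    (hproper : (∃ x, ψ x ≠ ⊤) ∧ ∀ x, ψ x ≠ ⊥)
    (hconv : ConvexE ψ) (hlsc : LowerSemicontinuous ψ)
    (D : Set (EV n)) (hD : D = {z | ψ z ≠ ⊤}) :
    (∀ x ∈ interior D, ∀ q : EV n,
      psiLower ψ x q = ⨅ xs ∈ subdiff ψ x, ((⟪xs, q⟫_ℝ : ℝ) : EReal)) ∧
    (∀ x ∈ frontier D, ∀ q : EV n,
      (0 < ⨅ m ∈ unitNormals D x, ((⟪m, q⟫_ℝ : ℝ) : EReal)) →
      psiLower ψ x q = ⨅ xs ∈ subdiff ψ x, ((⟪xs, q⟫_ℝ : ℝ) : EReal)) := by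
  constructor
  · intro x hx q
    have hempty : unitNormals D x = ∅ := by
      rw [eq_empty_iff_forall_notMem]
      rintro m ⟨hm1, hm2⟩
      obtain ⟨ε, hε, hball⟩ := Metric.mem_nhds_iff.mp (mem_interior_iff_mem_nhds.mp hx)
      have hz : x + (ε / 2) • m ∈ Metric.ball x ε := by
        rw [Metric.mem_ball, dist_eq_norm, add_sub_cancel_left, norm_smul,
          Real.norm_eq_abs, abs_of_pos (by linarith), hm1]
        linarith
      have := hm2 _ (subset_closure (hball hz))
      rw [add_sub_cancel_left, real_inner_smul_right, real_inner_self_eq_norm_sq, hm1] at this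
      nlinarith
    have hN : (0 : EReal) < ⨅ m ∈ unitNormals D x, ((⟪m, q⟫_ℝ : ℝ) : EReal) := by
      rw [hempty]
      simp
    exact le_antisymm (psiLower_le x q) (le_psiLower hproper hlsc D hD x q hN)
  · intro x _ q hN
    exact le_antisymm (psiLower_le x q) (le_psiLower hproper hlsc D hD x q hN)
end
end

section
/- Let Ã, C̃ > 0 and T > 0, and define η(x) = (log((|x|²+1)^{1/2}) + 1)² and χ(t,x) = exp{[C̃(T−t)+Ã]η(x)} for (t,x) ∈ [0,T]×ℝⁿ. Then η(x) ≥ 1 for all x, and for every (t,x) with C̃(T−t) ≤ Ã: (i) the spatial gradient satisfies D_xχ(t,x) = [C̃(T−t)+Ã]·χ(t,x)·(2η(x)^{1/2}/(1+|x|²))·x; (ii) |D_xχ(t,x)| ≤ 4Ã·(η(x)^{1/2}/(1+|x|²)^{1/2})·χ(t,x); (iii) the spatial Hessian satisfies ‖D²_xχ(t,x)‖ ≤ 16(Ã²+Ã)·(η(x)/(1+|x|²))·χ(t,x). -/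
open Filter Set

noncomputable section

/-- `η(x) = (log((|x|²+1)^{1/2}) + 1)²`. -/
def etaF {n : ℕ} (x : EV n) : ℝ := (Real.log (Real.sqrt (‖x‖ ^ 2 + 1)) + 1) ^ 2

/-- `χ(t,x) = exp{[C̃(T−t)+Ã]η(x)}`. -/
def chiF {n : ℕ} (Ctil Atil T : ℝ) (t : ℝ) (x : EV n) : ℝ :=
  Real.exp ((Ctil * (T - t) + Atil) * etaF x)

/-! ### Auxiliary lemmas -/

lemma hasDerivAt_hF (a r : ℝ) (hr : 0 ≤ r) :
    HasDerivAt (fun r : ℝ => Real.exp (a * (Real.log (r+1)/2 + 1)^2))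
      (Real.exp (a * (Real.log (r+1)/2 + 1)^2) * (a * (Real.log (r+1)/2 + 1) / (r+1))) r := by
  have h1 : HasDerivAt (fun r : ℝ => r + 1) 1 r := (hasDerivAt_id r).add_const 1
  have h2 : HasDerivAt (fun r : ℝ => Real.log (r+1)) (1/(r+1)) r := by
    simpa using h1.log (by linarith)
  have h3 := (h2.div_const 2).add_const 1
  have h6 := (((h3.pow 2).const_mul a).exp)
  convert h6 using 1
  · rfl
  have : r + 1 ≠ 0 := by linarith
  norm_num
  ring

lemma etaF_eq {n : ℕ} (x : EV n) : etaF x = (Real.log (‖x‖^2+1)/2 + 1)^2 := by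
  unfold etaF
  rw [Real.log_sqrt (by positivity)]

lemma one_le_P {n : ℕ} (x : EV n) : 1 ≤ Real.log (‖x‖^2+1)/2 + 1 := by
  have : 0 ≤ Real.log (‖x‖^2+1) := Real.log_nonneg (by nlinarith [sq_nonneg ‖x‖])
  linarith

lemma sqrt_etaF {n : ℕ} (x : EV n) : Real.sqrt (etaF x) = Real.log (‖x‖^2+1)/2 + 1 := by
  rw [etaF_eq, Real.sqrt_sq (by linarith [one_le_P x])]

lemma one_le_etaF {n : ℕ} (x : EV n) : 1 ≤ etaF x := by
  rw [etaF_eq]; nlinarith [one_le_P x]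

lemma hasGradientAt_chi {n : ℕ} (a : ℝ) (x : EV n) :
    HasGradientAt (fun y : EV n => Real.exp (a * etaF y))
      ((a * Real.exp (a * etaF x) * (2 * Real.sqrt (etaF x) / (1 + ‖x‖^2))) • x) x := by
  have hfun : (fun y : EV n => Real.exp (a * etaF y))
      = fun y : EV n => Real.exp (a * (Real.log (‖y‖^2+1)/2 + 1)^2) := by
    funext y; rw [etaF_eq]
  rw [hasGradientAt_iff_hasFDerivAt, hfun]
  have hns : HasFDerivAt (fun y : EV n => ‖y‖^2)
      (2 • (innerSL ℝ x).comp (ContinuousLinearMap.id ℝ (EV n))) x := by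
    simpa using (hasFDerivAt_id x).norm_sq
  have hd := hasDerivAt_hF a (‖x‖^2) (by positivity)
  have := hd.comp_hasFDerivAt x hns
  convert this using 1
  · rfl
  · rfl
  ext v
  simp only [InnerProductSpace.toDual_apply_apply, ContinuousLinearMap.smul_apply,
    ContinuousLinearMap.coe_comp', Function.comp_apply, ContinuousLinearMap.coe_id', id_eq,
    innerSL_apply_apply, real_inner_smul_left, smul_eq_mul]
  rw [sqrt_etaF, etaF_eq]
  ring

/-- coefficient function: `∇χ y = kF a ‖y‖² • y` -/
def kF (a r : ℝ) : ℝ :=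
  a * (Real.exp (a * (Real.log (r+1)/2 + 1)^2) * (2 * (Real.log (r+1)/2 + 1) / (1+r)))

lemma grad_chi_eq {n : ℕ} (a : ℝ) (x : EV n) :
    gradient (fun y : EV n => Real.exp (a * etaF y)) x = kF a (‖x‖^2) • x := by
  rw [(hasGradientAt_chi a x).gradient]
  congr 1
  rw [sqrt_etaF, etaF_eq, kF]
  ring

lemma hasDerivAt_kF (a r : ℝ) (hr : 0 ≤ r) :
    HasDerivAt (kF a)
      (a * (Real.exp (a * (Real.log (r+1)/2 + 1)^2) *
        ((2*a*(Real.log (r+1)/2 + 1)^2 + 1 - 2*(Real.log (r+1)/2 + 1)) / (r+1)^2))) r := by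
  have hr1 : r + 1 ≠ 0 := by linarith
  have h1 : HasDerivAt (fun r : ℝ => r + 1) 1 r := (hasDerivAt_id r).add_const 1
  have h2 : HasDerivAt (fun r : ℝ => Real.log (r+1)) (1/(r+1)) r := by
    simpa using h1.log hr1
  have h3 := (h2.div_const 2).add_const 1
  have hE := hasDerivAt_hF a r hr
  have hden : HasDerivAt (fun r : ℝ => 1 + r) 1 r := (hasDerivAt_id r).const_add 1
  have hQ := ((h3.const_mul 2).div hden (by linarith))
  have hk := (hE.mul hQ).const_mul a
  convert hk using 1
  · rfl
  · rfl
  · rfl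
  simp only [Pi.div_apply]
  have h1r : (1:ℝ) + r ≠ 0 := by linarith
  generalize Real.exp (a * (Real.log (r+1)/2 + 1)^2) = E
  field_simp
  ring

lemma hasFDerivAt_gradchi {n : ℕ} (a : ℝ) (x : EV n) :
    HasFDerivAt (fun y : EV n => gradient (fun z : EV n => Real.exp (a * etaF z)) y)
      (kF a (‖x‖^2) • ContinuousLinearMap.id ℝ (EV n) +
        ((a * (Real.exp (a * (Real.log (‖x‖^2+1)/2 + 1)^2) *
          ((2*a*(Real.log (‖x‖^2+1)/2 + 1)^2 + 1 - 2*(Real.log (‖x‖^2+1)/2 + 1)) / (‖x‖^2+1)^2)))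
            • (2 • (innerSL ℝ x).comp (ContinuousLinearMap.id ℝ (EV n)))).smulRight x) x := by
  have hfun : (fun y : EV n => gradient (fun z : EV n => Real.exp (a * etaF z)) y)
      = fun y : EV n => kF a (‖y‖^2) • y := funext fun y => grad_chi_eq a y
  rw [hfun]
  have hns : HasFDerivAt (fun y : EV n => ‖y‖^2)
      (2 • (innerSL ℝ x).comp (ContinuousLinearMap.id ℝ (EV n))) x := by
    simpa using (hasFDerivAt_id x).norm_sq
  have hk := (hasDerivAt_kF a (‖x‖^2) (by positivity)).comp_hasFDerivAt x hns
  exact hk.smul (hasFDerivAt_id x)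

/-! ### Arithmetic lemmas -/

lemma arith2 (A a N P Ex : ℝ) (hA : 0 < A) (ha : 0 < a) (haA : a ≤ 2*A)
    (hN0 : 0 ≤ N) (hP : 1 ≤ P) (hE : 0 < Ex) :
    |a * Ex * (2 * P / (1 + N^2))| * N ≤ 4 * A * (P / Real.sqrt (1 + N^2)) * Ex := by
  have hP0 : 0 < P := by linarith
  have hs' : (0:ℝ) < 1 + N^2 := by positivity
  have hR0 : 0 < Real.sqrt (1 + N^2) := Real.sqrt_pos.mpr hs'
  set R := Real.sqrt (1 + N^2) with hR_def
  have hR2 : R^2 = 1 + N^2 := Real.sq_sqrt hs'.le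
  have hNR : N ≤ R := (Real.le_sqrt hN0 hs'.le).mpr (by linarith)
  rw [abs_of_pos (by positivity)]
  rw [show a * Ex * (2 * P / (1 + N^2)) * N = (2*a*Ex*P*N)/(1+N^2) from by ring,
      show 4 * A * (P / R) * Ex = (4*A*P*Ex)/R from by ring,
      div_le_div_iff₀ hs' hR0, ← hR2]
  nlinarith [mul_nonneg (mul_nonneg (mul_nonneg (mul_nonneg hA.le hE.le) hP0.le) hR0.le)
      (sub_nonneg.mpr hNR),
    mul_nonneg (mul_nonneg (mul_nonneg (mul_nonneg hE.le hP0.le) hN0) hR0.le)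
      (sub_nonneg.mpr haA)]

lemma arith3 (A a N P Ex : ℝ) (hA : 0 < A) (ha : 0 < a) (haA : a ≤ 2*A)
    (hN0 : 0 ≤ N) (hP : 1 ≤ P) (hE : 0 < Ex) :
    |a * (Ex * (2*P/(1+N^2)))| + |a * (Ex * ((2*a*P^2 + 1 - 2*P)/(N^2+1)^2))| * (2*N) * N
      ≤ 16 * (A^2 + A) * (P^2/(1+N^2)) * Ex := by
  have hP0 : 0 < P := by linarith
  have hs : (0:ℝ) < N^2 + 1 := by positivity
  have hs' : (0:ℝ) < 1 + N^2 := by positivity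
  have habsK : |a * (Ex * (2*P/(1+N^2)))| = a * (Ex * (2*P/(1+N^2))) :=
    abs_of_pos (by positivity)
  have habsk' : |a * (Ex * ((2*a*P^2 + 1 - 2*P)/(N^2+1)^2))|
      ≤ a * (Ex * ((2*a*P^2 + 2*P)/(N^2+1)^2)) := by
    have hZ : |2*a*P^2 + 1 - 2*P| ≤ 2*a*P^2 + 2*P := by
      rw [abs_le]
      constructor <;> nlinarith [mul_nonneg (mul_nonneg ha.le hP0.le) hP0.le]
    calc |a * (Ex * ((2*a*P^2 + 1 - 2*P)/(N^2+1)^2))|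
        = a * (Ex * (|2*a*P^2 + 1 - 2*P|/(N^2+1)^2)) := by
          rw [abs_mul, abs_mul, abs_div, abs_of_pos ha, abs_of_pos hE,
            abs_of_pos (by positivity : (0:ℝ) < (N^2+1)^2)]
      _ ≤ a * (Ex * ((2*a*P^2 + 2*P)/(N^2+1)^2)) := by gcongr
  have t1 : a * (Ex * (2*P/(1+N^2))) ≤ 4*A*P^2*Ex/(1+N^2) := by
    rw [show a * (Ex * (2*P/(1+N^2))) = (a*Ex*(2*P))/(1+N^2) from by ring]
    gcongr ?_ / _
    nlinarith [mul_nonneg (mul_nonneg hE.le hP0.le) (sub_nonneg.mpr haA),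
      mul_nonneg (mul_nonneg (mul_nonneg hE.le hA.le) hP0.le) (sub_nonneg.mpr hP)]
  have t2 : a * (Ex * ((2*a*P^2 + 2*P)/(N^2+1)^2)) * (2*N) * N
      ≤ (16*A^2+8*A)*P^2*Ex/(1+N^2) := by
    rw [show a * (Ex * ((2*a*P^2 + 2*P)/(N^2+1)^2)) * (2*N) * N
        = (a*Ex*(2*a*P^2+2*P)*(2*N^2))/((N^2+1)^2) from by ring,
      show (16*A^2+8*A)*P^2*Ex/(1+N^2)
        = ((16*A^2+8*A)*P^2*Ex*(N^2+1))/((N^2+1)^2) from by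
          rw [div_eq_div_iff hs'.ne' (by positivity)]; ring]
    gcongr ?_ / _
    nlinarith [mul_nonneg (mul_nonneg (mul_nonneg (mul_nonneg hE.le (sub_nonneg.mpr haA)) ha.le)
        (sq_nonneg P)) (sq_nonneg N),
      mul_nonneg (mul_nonneg (mul_nonneg hE.le (sub_nonneg.mpr haA)) hP0.le) (sq_nonneg N),
      mul_nonneg (mul_nonneg (mul_nonneg (mul_nonneg hE.le hA.le) hP0.le) (sub_nonneg.mpr hP))
        (sq_nonneg N),
      mul_nonneg (mul_nonneg hE.le (mul_nonneg hA.le hA.le)) (sq_nonneg P),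
      mul_nonneg (mul_nonneg hE.le hA.le) (mul_nonneg hP0.le hP0.le)]
  calc |a * (Ex * (2*P/(1+N^2)))| + |a * (Ex * ((2*a*P^2 + 1 - 2*P)/(N^2+1)^2))| * (2*N) * N
      ≤ a * (Ex * (2*P/(1+N^2))) + a * (Ex * ((2*a*P^2 + 2*P)/(N^2+1)^2)) * (2*N) * N := by
        have h2N : (0:ℝ) ≤ 2*N := by linarith
        exact add_le_add habsK.le
          (mul_le_mul_of_nonneg_right (mul_le_mul_of_nonneg_right habsk' h2N) hN0)
    _ ≤ 4*A*P^2*Ex/(1+N^2) + (16*A^2+8*A)*P^2*Ex/(1+N^2) := add_le_add t1 t2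
    _ ≤ 16 * (A^2 + A) * (P^2/(1+N^2)) * Ex := by
        rw [← add_div, show 16 * (A^2 + A) * (P^2/(1+N^2)) * Ex
          = (16 * (A^2 + A) * P^2 * Ex)/(1+N^2) from by ring]
        gcongr ?_ / _
        nlinarith [mul_nonneg (mul_nonneg hA.le hE.le) (sq_nonneg P)]

/-- **(Derivative estimates for the barrier `χ`.)** `η ≥ 1` everywhere, and whenever
`0 ≤ C̃(T−t) ≤ Ã`: (i) `D_xχ = [C̃(T−t)+Ã]χ (2η^{1/2}/(1+|x|²)) x`;
(ii) `|D_xχ| ≤ 4Ã (η^{1/2}/(1+|x|²)^{1/2}) χ`;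
(iii) the operator norm of the Hessian satisfies `‖D²_xχ‖ ≤ 16(Ã²+Ã) (η/(1+|x|²)) χ`. -/
theorem stmt_15 {n : ℕ} (Atil Ctil T : ℝ) (hA : 0 < Atil) (hC : 0 < Ctil) (hT : 0 < T) :
    (∀ x : EV n, 1 ≤ etaF x) ∧
    (∀ (t : ℝ) (x : EV n), 0 ≤ Ctil * (T - t) → Ctil * (T - t) ≤ Atil →
      (gradient (fun y : EV n => chiF Ctil Atil T t y) x
          = ((Ctil * (T - t) + Atil) * chiF Ctil Atil T t x
              * (2 * Real.sqrt (etaF x) / (1 + ‖x‖ ^ 2))) • x) ∧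
      ‖gradient (fun y : EV n => chiF Ctil Atil T t y) x‖
          ≤ 4 * Atil * (Real.sqrt (etaF x) / Real.sqrt (1 + ‖x‖ ^ 2))
              * chiF Ctil Atil T t x ∧
      ‖fderiv ℝ (fun y : EV n => gradient (fun z : EV n => chiF Ctil Atil T t z) y) x‖
          ≤ 16 * (Atil ^ 2 + Atil) * (etaF x / (1 + ‖x‖ ^ 2)) * chiF Ctil Atil T t x) := by
  refine ⟨one_le_etaF, fun t x h0 h1 => ?_⟩
  set a := Ctil * (T - t) + Atil with ha_def
  have ha : 0 < a := by rw [ha_def]; linarith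
  have haA : a ≤ 2 * Atil := by rw [ha_def]; linarith
  have hfe : (fun y : EV n => chiF Ctil Atil T t y) = fun y : EV n => Real.exp (a * etaF y) :=
    rfl
  have hchi : chiF Ctil Atil T t x = Real.exp (a * (Real.log (‖x‖^2+1)/2 + 1)^2) := by
    rw [chiF, etaF_eq]
  have hP : 1 ≤ Real.log (‖x‖^2+1)/2 + 1 := one_le_P x
  have hE : (0:ℝ) < Real.exp (a * (Real.log (‖x‖^2+1)/2 + 1)^2) := Real.exp_pos _
  have hgrad : gradient (fun y : EV n => chiF Ctil Atil T t y) x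
      = ((Ctil * (T - t) + Atil) * chiF Ctil Atil T t x
          * (2 * Real.sqrt (etaF x) / (1 + ‖x‖ ^ 2))) • x := by
    rw [hfe]
    exact (hasGradientAt_chi a x).gradient
  refine ⟨hgrad, ?_, ?_⟩
  · -- part (ii)
    rw [hgrad, norm_smul, Real.norm_eq_abs, hchi, sqrt_etaF]
    exact arith2 Atil a ‖x‖ (Real.log (‖x‖^2+1)/2 + 1) _
      hA ha haA (norm_nonneg x) hP hE
  · -- part (iii)
    have hfun : (fun y : EV n => gradient (fun z : EV n => chiF Ctil Atil T t z) y)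
        = fun y : EV n => gradient (fun z : EV n => Real.exp (a * etaF z)) y := rfl
    rw [hfun, (hasFDerivAt_gradchi a x).fderiv]
    set k' := a * (Real.exp (a * (Real.log (‖x‖^2+1)/2 + 1)^2) *
        ((2*a*(Real.log (‖x‖^2+1)/2 + 1)^2 + 1 - 2*(Real.log (‖x‖^2+1)/2 + 1)) / (‖x‖^2+1)^2))
      with hk'_def
    have hDns : ‖(2 • (innerSL ℝ x).comp (ContinuousLinearMap.id ℝ (EV n)) : EV n →L[ℝ] ℝ)‖
        ≤ 2 * ‖x‖ := by
      rw [ContinuousLinearMap.comp_id, two_smul]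
      calc ‖innerSL ℝ x + innerSL ℝ x‖ ≤ ‖innerSL ℝ x‖ + ‖innerSL ℝ x‖ := norm_add_le _ _
        _ = 2 * ‖x‖ := by rw [innerSL_apply_norm]; ring
    have hop : ‖kF a (‖x‖^2) • ContinuousLinearMap.id ℝ (EV n) +
        (k' • (2 • (innerSL ℝ x).comp (ContinuousLinearMap.id ℝ (EV n)))).smulRight x‖
        ≤ |kF a (‖x‖^2)| + |k'| * (2*‖x‖) * ‖x‖ := by
      refine le_trans (norm_add_le _ _) (add_le_add ?_ ?_)
      · calc ‖kF a (‖x‖^2) • ContinuousLinearMap.id ℝ (EV n)‖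
            ≤ ‖kF a (‖x‖^2)‖ * ‖ContinuousLinearMap.id ℝ (EV n)‖ :=
              ContinuousLinearMap.opNorm_smul_le _ _
          _ ≤ |kF a (‖x‖^2)| * 1 := by
              rw [Real.norm_eq_abs]
              exact mul_le_mul_of_nonneg_left ContinuousLinearMap.norm_id_le (abs_nonneg _)
          _ = |kF a (‖x‖^2)| := mul_one _
      · rw [ContinuousLinearMap.norm_smulRight_apply]
        have hsm : ‖k' • (2 • (innerSL ℝ x).comp (ContinuousLinearMap.id ℝ (EV n)) :
            EV n →L[ℝ] ℝ)‖ ≤ |k'| * (2*‖x‖) := by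
          refine le_trans (ContinuousLinearMap.opNorm_smul_le _ _) ?_
          rw [Real.norm_eq_abs]
          exact mul_le_mul_of_nonneg_left hDns (abs_nonneg _)
        exact mul_le_mul hsm le_rfl (norm_nonneg x)
          (mul_nonneg (abs_nonneg _) (by positivity))
    refine le_trans hop ?_
    rw [hk'_def, show kF a (‖x‖^2) = a * (Real.exp (a * (Real.log (‖x‖^2+1)/2 + 1)^2) *
        (2 * (Real.log (‖x‖^2+1)/2 + 1) / (1+‖x‖^2))) from rfl,
      etaF_eq, hchi]
    exact arith3 Atil a ‖x‖ (Real.log (‖x‖^2+1)/2 + 1) _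
      hA ha haA (norm_nonneg x) hP hE
end
end
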